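/- Let X be a metric space and let G : X × ℝ → ℝ be continuous. Suppose that (1) for every v ∈ X the function g_v = G(v,·) : ℝ → ℝ is an increasing homeomorphism of ℝ, and (2) whenever a sequence {v_n} in X is bounded and b_n → +∞ (respectively b_n → −∞) one has G(v_n, b_n) → +∞ (respectively G(v_n, b_n) → −∞). Fix a constant C ∈ ℝ. Then the function c : X → ℝ defined by the relation G(v, c(v)) = C is well defined and continuous. -/
import Mathlib


open Set Filter Topology

/-- Lemma 3.1 (implicit-function type lemma): if `G : X × ℝ → ℝ` is continuous,
each `G(v,·)` is an increasing homeomorphism of `ℝ`, and `G(vₙ,bₙ) → ±∞`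
whenever `{vₙ}` is bounded and `bₙ → ±∞`, then the function `c` defined by
`G(v, c(v)) = C` is well defined and continuous. -/
theorem continuous_implicit_function
    {X : Type*} [MetricSpace X]
    (G : X × ℝ → ℝ) (hG : Continuous G)
    (hmono : ∀ v : X, StrictMono fun b => G (v, b))
    (hcont : ∀ v : X, Continuous fun b => G (v, b))
    (hbij : ∀ v : X, Function.Bijective fun b => G (v, b))
    (htop : ∀ (vn : ℕ → X) (bn : ℕ → ℝ), Bornology.IsBounded (Set.range vn) →
      Tendsto bn atTop atTop → Tendsto (fun n => G (vn n, bn n)) atTop atTop)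
    (hbot : ∀ (vn : ℕ → X) (bn : ℕ → ℝ), Bornology.IsBounded (Set.range vn) →
      Tendsto bn atTop atBot → Tendsto (fun n => G (vn n, bn n)) atTop atBot)
    (C : ℝ) :
    ∃ c : X → ℝ, Continuous c ∧ (∀ v : X, G (v, c v) = C) ∧
      ∀ v : X, ∀ b : ℝ, G (v, b) = C → b = c v := by
  choose c hc using fun v => (hbij v).2 C
  simp only [] at hc
  refine ⟨c, ?_, hc, fun v b hb => (hbij v).1 (by simpa using hb.trans (hc v).symm)⟩
  rw [continuous_iff_continuousAt]
  intro v₀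
  rw [ContinuousAt, tendsto_order]
  constructor
  · intro a' ha'
    have hcst : Continuous fun v : X => G (v, a') :=
      hG.comp (continuous_id.prodMk continuous_const)
    have hopen : IsOpen {v : X | G (v, a') < C} := isOpen_lt hcst continuous_const
    have hv₀ : G (v₀, a') < C := by
      have := (hmono v₀) ha'
      simpa [hc v₀] using this
    filter_upwards [hopen.mem_nhds hv₀] with v hv
    by_contra h
    push_neg at h
    have := (hmono v).monotone h
    simp only [hc v] at this
    exact absurd (this.trans_lt hv) (lt_irrefl _)
  · intro a' ha'
    have hcst : Continuous fun v : X => G (v, a') :=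
      hG.comp (continuous_id.prodMk continuous_const)
    have hopen : IsOpen {v : X | C < G (v, a')} := isOpen_lt continuous_const hcst
    have hv₀ : C < G (v₀, a') := by
      have := (hmono v₀) ha'
      simpa [hc v₀] using this
    filter_upwards [hopen.mem_nhds hv₀] with v hv
    by_contra h
    push_neg at h
    have := (hmono v).monotone h
    simp only [hc v] at this
    exact absurd (hv.trans_le this) (lt_irrefl _)
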